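/- Let N ≥ 1, let ρ₁, …, ρ_N be n×n density matrices (positive semidefinite with trace 1), and let π₁, …, π_N be nonnegative reals summing to 1. Then for EVERY POVM {Π₁, …, Π_N} on ℂⁿ, the error probability satisfies Σ_{i ≠ j} π_i · Tr(Π_j ρ_i) ≥ (1/2) · Σ_{i ≠ j} π_i π_j · F(ρ_i, ρ_j)². -/

import Mathlib

set_option linter.unusedSectionVars false
set_option maxHeartbeats 2000000

open Matrix
open scoped ComplexOrder

/-- The positive semidefinite square root of a matrix (junk value 0 if not PSD). -/
noncomputable def matSqrt {ι : Type*} [Fintype ι] [DecidableEq ι]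
    (A : Matrix ι ι ℂ) : Matrix ι ι ℂ :=
  open scoped Classical in
  if h : A.PosSemidef then (h.1.eigenvectorUnitary : Matrix ι ι ℂ) *
    diagonal ((↑) ∘ Real.sqrt ∘ h.1.eigenvalues) * (star h.1.eigenvectorUnitary : Matrix ι ι ℂ)
  else 0

/-- The fidelity F(ρ, σ) = Tr √(√ρ · σ · √ρ) between matrices. -/
noncomputable def mFid {ι : Type*} [Fintype ι] [DecidableEq ι]
    (ρ σ : Matrix ι ι ℂ) : ℝ :=
  ((matSqrt (matSqrt ρ * σ * matSqrt ρ)).trace).re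

section helpers

variable {m : Type*} [Fintype m] [DecidableEq m]

noncomputable def Matrix.PosSemidef.sqrt {A : Matrix m m ℂ} (h : A.PosSemidef) : Matrix m m ℂ :=
  (h.1.eigenvectorUnitary : Matrix m m ℂ) *
    diagonal ((↑) ∘ Real.sqrt ∘ h.1.eigenvalues) * (star h.1.eigenvectorUnitary : Matrix m m ℂ)

lemma Matrix.PosSemidef.posSemidef_sqrt {A : Matrix m m ℂ} (h : A.PosSemidef) :
    h.sqrt.PosSemidef := by
  have hd : (diagonal ((↑) ∘ Real.sqrt ∘ h.1.eigenvalues : m → ℂ)).PosSemidef := by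
    rw [posSemidef_diagonal_iff]
    intro i
    simp [Real.sqrt_nonneg]
  have := hd.mul_mul_conjTranspose_same (h.1.eigenvectorUnitary : Matrix m m ℂ)
  rwa [← Matrix.star_eq_conjTranspose] at this

lemma Matrix.PosSemidef.sqrt_mul_self {A : Matrix m m ℂ} (h : A.PosSemidef) :
    h.sqrt * h.sqrt = A := by
  set U : Matrix m m ℂ := (h.1.eigenvectorUnitary : Matrix m m ℂ) with hU
  have hUU : star U * U = 1 := Matrix.mem_unitaryGroup_iff'.mp (h.1.eigenvectorUnitary).2
  have hspec := h.1.spectral_theorem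
  rw [Unitary.conjStarAlgAut_apply] at hspec
  have e : Matrix.PosSemidef.sqrt h = U *
      diagonal ((↑) ∘ Real.sqrt ∘ h.1.eigenvalues) * star U := rfl
  rw [e]
  calc U * diagonal ((↑) ∘ Real.sqrt ∘ h.1.eigenvalues) * star U *
        (U * diagonal ((↑) ∘ Real.sqrt ∘ h.1.eigenvalues) * star U)
      = U * (diagonal ((↑) ∘ Real.sqrt ∘ h.1.eigenvalues) * (star U * U) *
          diagonal ((↑) ∘ Real.sqrt ∘ h.1.eigenvalues)) * star U := by
        simp only [Matrix.mul_assoc]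
    _ = U * diagonal (RCLike.ofReal ∘ h.1.eigenvalues) * star U := by
        rw [hUU, Matrix.mul_one, diagonal_mul_diagonal]
        congr 3
        funext k
        simp only [Function.comp_apply]
        rw [← Complex.ofReal_mul, Real.mul_self_sqrt (h.eigenvalues_nonneg k)]
        rfl
    _ = A := hspec.symm


lemma psd_trace_re_nonneg {A : Matrix m m ℂ} (hA : A.PosSemidef) : 0 ≤ A.trace.re := by
  have h : ∀ i, 0 ≤ (A i i).re := by
    intro i
    have := hA.re_dotProduct_nonneg (Pi.single i 1)
    simpa [dotProduct, Pi.single_apply, mulVec] using this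
  rw [Matrix.trace, Complex.re_sum]
  exact Finset.sum_nonneg fun i _ => h i

lemma trace_mul_psd_re_nonneg {A B : Matrix m m ℂ} (hA : A.PosSemidef) (hB : B.PosSemidef) :
    0 ≤ ((A * B).trace).re := by
  have h1 : A * B = hA.sqrt * (hA.sqrt * B) := by
    rw [← Matrix.mul_assoc, hA.sqrt_mul_self]
  have h2 : ((A * B).trace) = ((hA.sqrt * B * hA.sqrt).trace) := by
    rw [h1, Matrix.trace_mul_comm, Matrix.mul_assoc]
  have h3 : (hA.sqrt * B * hA.sqrt).PosSemidef := by
    have := hB.conjTranspose_mul_mul_same (B := hA.sqrt)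
    rwa [hA.posSemidef_sqrt.1.eq] at this
  rw [h2]
  exact psd_trace_re_nonneg h3


lemma trace_conjTranspose_mul_re_eq (B : Matrix m m ℂ) :
    ((Bᴴ * B).trace).re = ∑ p : m × m, ‖B p.1 p.2‖ ^ 2 := by
  rw [Matrix.trace, Complex.re_sum, Fintype.sum_prod_type]
  rw [Finset.sum_comm]
  refine Finset.sum_congr rfl fun i _ => ?_
  rw [Matrix.diag_apply, Matrix.mul_apply, Complex.re_sum]
  refine Finset.sum_congr rfl fun k _ => ?_
  rw [Matrix.conjTranspose_apply]
  rw [← Complex.normSq_eq_norm_sq]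
  simp [Complex.normSq, Complex.mul_re, Complex.mul_im]

lemma trace_cs (B C : Matrix m m ℂ) :
    ((Bᴴ * C).trace).re ≤
      Real.sqrt ((Bᴴ * B).trace).re * Real.sqrt ((Cᴴ * C).trace).re := by
  have h1 : ((Bᴴ * C).trace).re ≤ ∑ p : m × m, ‖B p.1 p.2‖ * ‖C p.1 p.2‖ := by
    rw [Matrix.trace, Complex.re_sum]
    calc ∑ i, ((Bᴴ * C) i i).re
        ≤ ∑ i, ∑ k, ‖B k i‖ * ‖C k i‖ := by
          refine Finset.sum_le_sum fun i _ => ?_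
          rw [Matrix.mul_apply, Complex.re_sum]
          refine Finset.sum_le_sum fun k _ => ?_
          rw [Matrix.conjTranspose_apply]
          calc ((starRingEnd ℂ) (B k i) * C k i).re
              ≤ ‖(starRingEnd ℂ) (B k i) * C k i‖ := Complex.re_le_norm _
            _ = ‖B k i‖ * ‖C k i‖ := by
                rw [norm_mul, Complex.norm_conj]
      _ = ∑ p : m × m, ‖B p.1 p.2‖ * ‖C p.1 p.2‖ := by
          rw [Fintype.sum_prod_type, Finset.sum_comm]
  refine h1.trans ?_
  have h2 := Finset.sum_mul_sq_le_sq_mul_sq Finset.univ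
    (fun p : m × m => ‖B p.1 p.2‖) (fun p : m × m => ‖C p.1 p.2‖)
  have h3 : 0 ≤ ∑ p : m × m, ‖B p.1 p.2‖ * ‖C p.1 p.2‖ :=
    Finset.sum_nonneg fun p _ => mul_nonneg (norm_nonneg _) (norm_nonneg _)
  rw [trace_conjTranspose_mul_re_eq, trace_conjTranspose_mul_re_eq, ← Real.sqrt_mul
    (Finset.sum_nonneg fun p _ => sq_nonneg _)]
  calc (∑ p : m × m, ‖B p.1 p.2‖ * ‖C p.1 p.2‖)
      = Real.sqrt ((∑ p : m × m, ‖B p.1 p.2‖ * ‖C p.1 p.2‖) ^ 2) := by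
        rw [Real.sqrt_sq h3]
    _ ≤ _ := Real.sqrt_le_sqrt h2
lemma matSqrt_eq {A : Matrix m m ℂ} (hA : A.PosSemidef) : matSqrt A = hA.sqrt := by
  rw [matSqrt, dif_pos hA]; rfl


lemma fidelity_dp {N : ℕ} {ρ σ : Matrix m m ℂ}
    (hρ : ρ.PosSemidef) (hσ : σ.PosSemidef)
    (P : Fin N → Matrix m m ℂ) (hP : ∀ j, (P j).PosSemidef) (hPsum : ∑ j, P j = 1) :
    mFid ρ σ ≤ ∑ k, Real.sqrt ((P k * ρ).trace).re * Real.sqrt ((P k * σ).trace).re := by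
  have hRH : (hρ.sqrt)ᴴ = hρ.sqrt := hρ.posSemidef_sqrt.1
  have hSH : (hσ.sqrt)ᴴ = hσ.sqrt := hσ.posSemidef_sqrt.1
  set R := hρ.sqrt with hRdef
  set S := hσ.sqrt with hSdef
  have hRR : R * R = ρ := hρ.sqrt_mul_self
  have hSS : S * S = σ := hσ.sqrt_mul_self
  have hM : (R * σ * R).PosSemidef := by
    have := hσ.conjTranspose_mul_mul_same (B := R); rwa [hRH] at this
  set M := R * σ * R with hMdef
  -- eigen data
  set W : Matrix m m ℂ := (hM.1.eigenvectorUnitary : Matrix m m ℂ) with hWdef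
  have hWW : star W * W = 1 := Matrix.mem_unitaryGroup_iff'.mp (hM.1.eigenvectorUnitary).2
  have hWW' : W * star W = 1 := Matrix.mem_unitaryGroup_iff.mp (hM.1.eigenvectorUnitary).2
  set lam := hM.1.eigenvalues with hlamdef
  have hlam : ∀ k, 0 ≤ lam k := hM.eigenvalues_nonneg
  have hdiag : star W * M * W = Matrix.diagonal (fun k => (lam k : ℂ)) :=
    by have := hM.1.conjStarAlgAut_star_eigenvectorUnitary
       rw [Unitary.conjStarAlgAut_star_apply] at this; exact this
  have hsqrt_def : hM.sqrt = W * Matrix.diagonal (fun k => ((Real.sqrt (lam k) : ℝ) : ℂ)) * star W := by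
    rw [Matrix.PosSemidef.sqrt]; rfl
  have htrace : (hM.sqrt.trace).re = ∑ k, Real.sqrt (lam k) := by
    rw [hsqrt_def, Matrix.trace_mul_cycle, hWW, Matrix.one_mul,
      Matrix.trace_diagonal, Complex.re_sum]
    simp
  -- the partial isometry X
  set d : m → ℂ := fun k => if lam k = 0 then 0 else (((Real.sqrt (lam k) : ℝ)) : ℂ)⁻¹ with hd
  set A := S * R with hAdef
  set X := A * W * Matrix.diagonal d with hXdef
  have hAast : Aᴴ = R * S := by rw [hAdef, conjTranspose_mul, hRH, hSH]
  have hAA : Aᴴ * A = M := by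
    rw [hAast, hAdef, hMdef, ← hSS]
    simp only [Matrix.mul_assoc]
  have hdstar : star d = d := by
    funext k
    by_cases h : lam k = 0 <;> simp [hd, h, Complex.conj_ofReal]
  have hXH : Xᴴ = Matrix.diagonal d * (star W * Aᴴ) := by
    rw [hXdef, conjTranspose_mul, conjTranspose_mul, diagonal_conjTranspose, hdstar,
      Matrix.star_eq_conjTranspose]
  have sqrt_ne : ∀ k, lam k ≠ 0 → ((Real.sqrt (lam k) : ℝ) : ℂ) ≠ 0 := by
    intro k h
    simp only [ne_eq, Complex.ofReal_eq_zero]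
    exact Real.sqrt_ne_zero'.mpr (lt_of_le_of_ne (hlam k) (Ne.symm h))
  have hsq : ∀ k, ((Real.sqrt (lam k) : ℝ) : ℂ) * ((Real.sqrt (lam k) : ℝ) : ℂ) = (lam k : ℂ) := by
    intro k
    rw [← Complex.ofReal_mul, Real.mul_self_sqrt (hlam k)]
  have hXHX : Xᴴ * X = Matrix.diagonal (fun k => if lam k = 0 then (0:ℂ) else 1) := by
    have h1 : Xᴴ * X = Matrix.diagonal d * (star W * M * W) * Matrix.diagonal d := by
      rw [hXH, hXdef, ← hAA]
      simp only [Matrix.mul_assoc]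
    rw [h1, hdiag, Matrix.diagonal_mul_diagonal, Matrix.diagonal_mul_diagonal]
    refine congrArg Matrix.diagonal (funext fun k => ?_)
    show d k * (lam k : ℂ) * d k = _
    by_cases h : lam k = 0
    · simp [hd, h]
    · simp only [hd, if_neg h]
      rw [← hsq k]
      field_simp
      exact div_self (sqrt_ne k h)
  have hXE : X * (Xᴴ * X) = X := by
    rw [hXHX, hXdef, Matrix.mul_assoc, Matrix.diagonal_mul_diagonal]
    refine congrArg (fun (Y : Matrix m m ℂ) => A * W * Y) (congrArg Matrix.diagonal (funext fun k => ?_))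
    show d k * _ = d k
    by_cases h : lam k = 0 <;> simp [hd, h]
  have hProj : (X * Xᴴ) * (X * Xᴴ) = X * Xᴴ := by
    have h2 : X * Xᴴ * (X * Xᴴ) = X * (Xᴴ * X) * Xᴴ := by
      simp only [Matrix.mul_assoc]
    rw [h2, hXE]
  have hXXH_H : (X * Xᴴ)ᴴ = X * Xᴴ := by
    rw [conjTranspose_mul, conjTranspose_conjTranspose]
  have hT : (1 - X * Xᴴ).PosSemidef := by
    have key : (1 - X * Xᴴ)ᴴ * (1 - X * Xᴴ) = 1 - X * Xᴴ := by
      rw [conjTranspose_sub, conjTranspose_one, hXXH_H]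
      simp only [Matrix.mul_sub, Matrix.sub_mul, Matrix.one_mul, Matrix.mul_one, hProj]
      abel
    rw [← key]; exact posSemidef_conjTranspose_mul_self _
  -- fidelity as a trace of X†AW
  have hfid : mFid ρ σ = ((Xᴴ * (A * W)).trace).re := by
    have e : star W * Aᴴ * (A * W) = star W * M * W := by
      calc star W * Aᴴ * (A * W) = star W * (Aᴴ * A) * W := by simp only [Matrix.mul_assoc]
      _ = star W * M * W := by rw [hAA]
    have h1 : Xᴴ * (A * W) = Matrix.diagonal (fun k => d k * (lam k : ℂ)) := by
      rw [hXH, Matrix.mul_assoc, e, hdiag, Matrix.diagonal_mul_diagonal]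
    have h2 : mFid ρ σ = (hM.sqrt.trace).re := by
      rw [mFid, matSqrt_eq hρ, ← hRdef, ← hMdef, matSqrt_eq hM]
    rw [h2, htrace, h1, Matrix.trace_diagonal, Complex.re_sum]
    refine Finset.sum_congr rfl fun k _ => ?_
    by_cases h : lam k = 0
    · simp [hd, h, Real.sqrt_eq_zero', le_of_eq h.symm, h]
    · simp only [hd, if_neg h]
      rw [← Complex.ofReal_inv, ← Complex.ofReal_mul, Complex.ofReal_re,
        inv_mul_eq_div, Real.div_sqrt]
  -- split over the POVM
  have hsplit : Xᴴ * (A * W) = ∑ j, Xᴴ * (S * (P j) * (R * W)) := by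
    rw [← Finset.mul_sum]
    refine congrArg (fun Y => Xᴴ * Y) ?_
    calc A * W = S * ((1 : Matrix m m ℂ) * (R * W)) := by
          rw [Matrix.one_mul, hAdef, Matrix.mul_assoc]
      _ = S * ((∑ j, P j) * (R * W)) := by rw [hPsum]
      _ = ∑ j, S * (P j * (R * W)) := by rw [Finset.sum_mul, Finset.mul_sum]
      _ = ∑ j, S * (P j) * (R * W) := by simp only [Matrix.mul_assoc]
  have hsum : mFid ρ σ = ∑ j, ((Xᴴ * (S * (P j) * (R * W))).trace).re := by
    rw [hfid, hsplit, Matrix.trace_sum, Complex.re_sum]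
  rw [hsum]
  refine Finset.sum_le_sum fun j _ => ?_
  -- per-term bound
  have hQH : ((hP j).sqrt)ᴴ = (hP j).sqrt := (hP j).posSemidef_sqrt.1
  set Q := (hP j).sqrt with hQdef
  have hQQ : Q * Q = P j := (hP j).sqrt_mul_self
  have hQSX : (Q * (S * X))ᴴ = Xᴴ * S * Q := by
    rw [conjTranspose_mul, conjTranspose_mul, hQH, hSH, Matrix.mul_assoc]
  have hterm : Xᴴ * (S * (P j) * (R * W)) = (Q * (S * X))ᴴ * (Q * (R * W)) := by
    rw [hQSX, ← hQQ]
    simp only [Matrix.mul_assoc]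
  rw [hterm]
  have hcs := trace_cs (Q * (S * X)) (Q * (R * W))
  have hf2 : ((Q * (R * W))ᴴ * (Q * (R * W))).trace = ((P j) * ρ).trace := by
    have h3 : (Q * (R * W))ᴴ = (R * W)ᴴ * Q := by rw [conjTranspose_mul, hQH]
    have h5 : R * W * (R * W)ᴴ = ρ := by
      rw [conjTranspose_mul, hRH, ← Matrix.star_eq_conjTranspose]
      calc R * W * (star W * R) = R * (W * star W) * R := by simp only [Matrix.mul_assoc]
      _ = ρ := by rw [hWW', Matrix.mul_one, hRR]
    have h4 : Q * (R * W) * ((R * W)ᴴ * Q) = Q * (R * W * (R * W)ᴴ) * Q := by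
      simp only [Matrix.mul_assoc]
    rw [h3, Matrix.trace_mul_comm, h4, h5, Matrix.trace_mul_cycle, hQQ]
  have hCpsd : (S * (P j) * S).PosSemidef := by
    have := (hP j).conjTranspose_mul_mul_same (B := S); rwa [hSH] at this
  have hf1e : ((Q * (S * X))ᴴ * (Q * (S * X))).trace = ((S * (P j) * S) * (X * Xᴴ)).trace := by
    have h4 : Xᴴ * S * Q * (Q * (S * X)) = Xᴴ * (S * (P j) * S * X) := by
      rw [← hQQ]; simp only [Matrix.mul_assoc]
    rw [hQSX, h4, Matrix.trace_mul_comm]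
    exact congrArg Matrix.trace (by simp only [Matrix.mul_assoc])
  have htrC : ((S * (P j) * S).trace) = ((P j) * σ).trace := by
    rw [Matrix.trace_mul_cycle, hSS, Matrix.trace_mul_comm]
  have hf1le : (((S * (P j) * S) * (X * Xᴴ)).trace).re ≤ (((P j) * σ).trace).re := by
    have hdiff := trace_mul_psd_re_nonneg hCpsd hT
    have hexp : (S * (P j) * S) * (1 - X * Xᴴ) =
        (S * (P j) * S) - (S * (P j) * S) * (X * Xᴴ) := by
      rw [Matrix.mul_sub, Matrix.mul_one]
    rw [hexp, Matrix.trace_sub, Complex.sub_re, htrC] at hdiff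
    linarith
  calc ((Q * (S * X))ᴴ * (Q * (R * W))).trace.re
      ≤ Real.sqrt (((Q * (S * X))ᴴ * (Q * (S * X))).trace).re
        * Real.sqrt (((Q * (R * W))ᴴ * (Q * (R * W))).trace).re := hcs
    _ ≤ Real.sqrt (((P j) * σ).trace).re * Real.sqrt (((P j) * ρ).trace).re := by
        refine mul_le_mul ?_ ?_ (Real.sqrt_nonneg _) (Real.sqrt_nonneg _)
        · exact Real.sqrt_le_sqrt ((le_of_eq (congrArg Complex.re hf1e)).trans hf1le)
        · exact le_of_eq (congrArg (fun z => Real.sqrt (Complex.re z)) hf2)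
    _ = Real.sqrt (((P j) * ρ).trace).re * Real.sqrt (((P j) * σ).trace).re := mul_comm _ _

lemma mFid_nonneg {ρ σ : Matrix m m ℂ} (hρ : ρ.PosSemidef) (hσ : σ.PosSemidef) :
    0 ≤ mFid ρ σ := by
  have hM : (hρ.sqrt * σ * hρ.sqrt).PosSemidef := by
    have := hσ.conjTranspose_mul_mul_same (B := hρ.sqrt)
    rwa [hρ.posSemidef_sqrt.1.eq] at this
  rw [mFid, matSqrt_eq hρ, matSqrt_eq hM]
  exact psd_trace_re_nonneg hM.posSemidef_sqrt

end helpers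

lemma sum_pair_swap {N : ℕ} (f : Fin N → Fin N → ℝ) :
    (∑ i, ∑ j, if i = j then (0:ℝ) else f j i)
      = ∑ i, ∑ j, if i = j then (0:ℝ) else f i j := by
  rw [Finset.sum_comm]
  refine Finset.sum_congr rfl fun i _ => Finset.sum_congr rfl fun j _ => ?_
  rcases eq_or_ne i j with h | h
  · simp [h]
  · rw [if_neg (Ne.symm h), if_neg h]

/-- Montanaro's lower bound: every POVM has misclassification probability at least
(1/2) Σ_{i≠j} π_i π_j F(ρ_i, ρ_j)². -/
theorem montanaro_fidelity_lower_bound (N n : ℕ) (hN : 1 ≤ N)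
    (ρ : Fin N → Matrix (Fin n) (Fin n) ℂ)
    (hρ : ∀ i, (ρ i).PosSemidef) (htr : ∀ i, (ρ i).trace = 1)
    (π : Fin N → ℝ) (hπ : ∀ i, 0 ≤ π i) (hπsum : ∑ i, π i = 1) :
    ∀ P : Fin N → Matrix (Fin n) (Fin n) ℂ,
      (∀ j, (P j).PosSemidef) → (∑ j, P j = 1) →
        (1 / 2) * (∑ i, ∑ j, if i = j then 0
            else π i * π j * mFid (ρ i) (ρ j) ^ 2) ≤
          ∑ i, ∑ j, if i = j then 0 else π i * ((P j * ρ i).trace).re := by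
  intro P hP hPsum
  set q : Fin N → Fin N → ℝ := fun i k => ((P k * ρ i).trace).re with hqdef
  have hq0 : ∀ i k, 0 ≤ q i k := fun i k => trace_mul_psd_re_nonneg (hP k) (hρ i)
  have hq1 : ∀ i, ∑ k, q i k = 1 := by
    intro i
    have h1 : ∑ k, (P k * ρ i).trace = 1 := by
      rw [← Matrix.trace_sum, ← Finset.sum_mul, hPsum, Matrix.one_mul, htr i]
    have h2 : ∑ k, q i k = (∑ k, (P k * ρ i).trace).re := (Complex.re_sum _ _).symm
    rw [h2, h1, Complex.one_re]
  have hFC : ∀ i j, mFid (ρ i) (ρ j) ≤ ∑ k, Real.sqrt (q i k) * Real.sqrt (q j k) :=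
    fun i j => fidelity_dp (hρ i) (hρ j) P hP hPsum
  have hF0 : ∀ i j, 0 ≤ mFid (ρ i) (ρ j) := fun i j => mFid_nonneg (hρ i) (hρ j)
  set msum : Fin N → Fin N → ℝ := fun i j => ∑ k, min (π i * q i k) (π j * q j k) with hmsum
  have key : ∀ i j, π i * π j * mFid (ρ i) (ρ j) ^ 2 ≤ (π i + π j) * msum i j := by
    intro i j
    have ha : ∀ k, 0 ≤ π i * q i k := fun k => mul_nonneg (hπ i) (hq0 i k)
    have hb : ∀ k, 0 ≤ π j * q j k := fun k => mul_nonneg (hπ j) (hq0 j k)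
    have h1 : Real.sqrt (π i) * Real.sqrt (π j) * mFid (ρ i) (ρ j)
        ≤ ∑ k, Real.sqrt (π i * q i k) * Real.sqrt (π j * q j k) := by
      have h2 := mul_le_mul_of_nonneg_left (hFC i j)
        (mul_nonneg (Real.sqrt_nonneg (π i)) (Real.sqrt_nonneg (π j)))
      calc Real.sqrt (π i) * Real.sqrt (π j) * mFid (ρ i) (ρ j)
          ≤ Real.sqrt (π i) * Real.sqrt (π j) * ∑ k, Real.sqrt (q i k) * Real.sqrt (q j k) := h2
        _ = ∑ k, Real.sqrt (π i * q i k) * Real.sqrt (π j * q j k) := by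
            rw [Finset.mul_sum]
            refine Finset.sum_congr rfl fun k _ => ?_
            rw [Real.sqrt_mul (hπ i), Real.sqrt_mul (hπ j)]
            ring
    have h3 : (∑ k, Real.sqrt (π i * q i k) * Real.sqrt (π j * q j k)) ^ 2
        ≤ msum i j * (∑ k, max (π i * q i k) (π j * q j k)) := by
      refine Finset.sum_sq_le_sum_mul_sum_of_sq_eq_mul Finset.univ
        (fun k _ => le_min (ha k) (hb k))
        (fun k _ => le_max_of_le_left (ha k))
        (fun k _ => ?_)
      rw [mul_pow, Real.sq_sqrt (ha k), Real.sq_sqrt (hb k), min_mul_max]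
    have h4 : (∑ k, max (π i * q i k) (π j * q j k)) ≤ π i + π j := by
      calc ∑ k, max (π i * q i k) (π j * q j k)
          ≤ ∑ k, (π i * q i k + π j * q j k) := Finset.sum_le_sum fun k _ =>
            max_le (le_add_of_nonneg_right (hb k)) (le_add_of_nonneg_left (ha k))
        _ = π i + π j := by
            rw [Finset.sum_add_distrib, ← Finset.mul_sum, ← Finset.mul_sum, hq1 i, hq1 j,
              mul_one, mul_one]
    have h5 : 0 ≤ msum i j := Finset.sum_nonneg fun k _ => le_min (ha k) (hb k)
    have h6 : π i * π j * mFid (ρ i) (ρ j) ^ 2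
        = (Real.sqrt (π i) * Real.sqrt (π j) * mFid (ρ i) (ρ j)) ^ 2 := by
      rw [mul_pow, mul_pow, Real.sq_sqrt (hπ i), Real.sq_sqrt (hπ j)]
    have h7 : 0 ≤ Real.sqrt (π i) * Real.sqrt (π j) * mFid (ρ i) (ρ j) :=
      mul_nonneg (mul_nonneg (Real.sqrt_nonneg _) (Real.sqrt_nonneg _)) (hF0 i j)
    calc π i * π j * mFid (ρ i) (ρ j) ^ 2
        = (Real.sqrt (π i) * Real.sqrt (π j) * mFid (ρ i) (ρ j)) ^ 2 := h6
      _ ≤ (∑ k, Real.sqrt (π i * q i k) * Real.sqrt (π j * q j k)) ^ 2 :=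
          pow_le_pow_left₀ h7 h1 2
      _ ≤ msum i j * (∑ k, max (π i * q i k) (π j * q j k)) := h3
      _ ≤ msum i j * (π i + π j) := mul_le_mul_of_nonneg_left h4 h5
      _ = (π i + π j) * msum i j := mul_comm _ _
  set G : Fin N → Fin N → Fin N → ℝ := fun i j k =>
    (if k = j then (π i + π j) * (π i * q i j) else 0)
      + (if k = i ∨ k = j then 0 else π j * (π i * q i k)) with hGdef
  have hptwise : ∀ i j k, i ≠ j →
      (π i + π j) * min (π i * q i k) (π j * q j k) ≤ G i j k + G j i k := by
    intro i j k hij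
    by_cases hki : k = i
    · have e1 : G i j k = 0 := by simp [hGdef, hki, hij]
      have e2 : G j i k = (π j + π i) * (π j * q j i) := by simp [hGdef, hki]
      calc (π i + π j) * min (π i * q i k) (π j * q j k)
          ≤ (π i + π j) * (π j * q j k) :=
            mul_le_mul_of_nonneg_left (min_le_right _ _) (add_nonneg (hπ i) (hπ j))
        _ = G i j k + G j i k := by rw [e1, e2, hki]; ring
    · by_cases hkj : k = j
      · have e1 : G i j k = (π i + π j) * (π i * q i j) := by simp [hGdef, hkj]
        have e2 : G j i k = 0 := by simp [hGdef, hkj, Ne.symm hij]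
        calc (π i + π j) * min (π i * q i k) (π j * q j k)
            ≤ (π i + π j) * (π i * q i k) :=
              mul_le_mul_of_nonneg_left (min_le_left _ _) (add_nonneg (hπ i) (hπ j))
          _ = G i j k + G j i k := by rw [e1, e2, hkj]; ring
      · have e1 : G i j k = π j * (π i * q i k) := by simp [hGdef, hki, hkj]
        have e2 : G j i k = π i * (π j * q j k) := by simp [hGdef, hki, hkj]
        calc (π i + π j) * min (π i * q i k) (π j * q j k)
            = π i * min (π i * q i k) (π j * q j k)
              + π j * min (π i * q i k) (π j * q j k) := by ring
          _ ≤ π i * (π j * q j k) + π j * (π i * q i k) :=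
              add_le_add (mul_le_mul_of_nonneg_left (min_le_right _ _) (hπ i))
                (mul_le_mul_of_nonneg_left (min_le_left _ _) (hπ j))
          _ = G i j k + G j i k := by rw [e1, e2]; ring
  -- the exact value of the G-sum
  have hGsum : (∑ i, ∑ j, if i = j then (0:ℝ) else ∑ k, G i j k)
      = ∑ i, ∑ j, if i = j then (0:ℝ) else π i * q i j := by
    have hsplit : ∀ i j, (∑ k, G i j k)
        = (π i + π j) * (π i * q i j)
          + ∑ k, (if k = i ∨ k = j then 0 else π j * (π i * q i k)) := by
      intro i j
      rw [hGdef]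
      rw [Finset.sum_add_distrib]
      congr 1
      rw [Finset.sum_ite_eq' Finset.univ j (fun _ => (π i + π j) * (π i * q i j))]
      simp
    have step1 : (∑ i, ∑ j, if i = j then (0:ℝ) else ∑ k, G i j k)
        = (∑ i, ∑ j, if i = j then (0:ℝ) else (π i + π j) * (π i * q i j))
          + (∑ i, ∑ j, if i = j then (0:ℝ) else
              ∑ k, (if k = i ∨ k = j then 0 else π j * (π i * q i k))) := by
      rw [← Finset.sum_add_distrib]
      refine Finset.sum_congr rfl fun i _ => ?_
      rw [← Finset.sum_add_distrib]
      refine Finset.sum_congr rfl fun j _ => ?_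
      rcases eq_or_ne i j with h | h
      · simp [h]
      · rw [if_neg h, if_neg h, if_neg h, hsplit]
    have step2 : (∑ i, ∑ j, if i = j then (0:ℝ) else
          ∑ k, (if k = i ∨ k = j then 0 else π j * (π i * q i k)))
        = ∑ i, ∑ j, if i = j then (0:ℝ) else (1 - π i - π j) * (π i * q i j) := by
      have e1 : ∀ (i j : Fin N), (if i = j then (0:ℝ) else
            ∑ k, (if k = i ∨ k = j then 0 else π j * (π i * q i k)))
          = ∑ k, (if i = k then (0:ℝ) else if j = i ∨ j = k then 0 else π j * (π i * q i k)) := by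
        intro i j
        rcases eq_or_ne i j with h | h
        · subst h
          rw [if_pos rfl]
          symm
          refine Finset.sum_eq_zero fun k _ => ?_
          rcases eq_or_ne i k with h2 | h2
          · rw [if_pos h2]
          · rw [if_neg h2, if_pos (Or.inl rfl)]
        · rw [if_neg h]
          refine Finset.sum_congr rfl fun k _ => ?_
          rcases eq_or_ne i k with h2 | h2
          · subst h2
            simp
          · rw [if_neg h2]
            rcases eq_or_ne k i with h3 | h3
            · exact absurd h3.symm h2
            · rcases eq_or_ne k j with h4 | h4
              · rw [if_pos (Or.inr h4), if_pos (Or.inr h4.symm)]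
              · rw [if_neg (by push_neg; exact ⟨h3, h4⟩),
                  if_neg (by push_neg; exact ⟨Ne.symm h, Ne.symm h4⟩)]
      calc (∑ i, ∑ j, if i = j then (0:ℝ) else
            ∑ k, (if k = i ∨ k = j then 0 else π j * (π i * q i k)))
          = ∑ i, ∑ j, ∑ k, (if i = k then (0:ℝ)
              else if j = i ∨ j = k then 0 else π j * (π i * q i k)) := by
            exact Finset.sum_congr rfl fun i _ => Finset.sum_congr rfl fun j _ => e1 i j
        _ = ∑ i, ∑ k, ∑ j, (if i = k then (0:ℝ)
              else if j = i ∨ j = k then 0 else π j * (π i * q i k)) := by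
            exact Finset.sum_congr rfl fun i _ => Finset.sum_comm
        _ = ∑ i, ∑ k, if i = k then (0:ℝ) else (1 - π i - π k) * (π i * q i k) := by
            refine Finset.sum_congr rfl fun i _ => Finset.sum_congr rfl fun k _ => ?_
            rcases eq_or_ne i k with h | h
            · simp [h]
            · rw [if_neg h]
              have e2 : ∀ j : Fin N, (if i = k then (0:ℝ)
                    else if j = i ∨ j = k then 0 else π j * (π i * q i k))
                  = (π j - ((if j = i then π j else 0) + (if j = k then π j else 0)))
                      * (π i * q i k) := by
                intro j
                rw [if_neg h]
                rcases eq_or_ne j i with h1 | h1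
                · rw [if_pos (Or.inl h1), if_pos h1]
                  rcases eq_or_ne j k with h2 | h2
                  · exact absurd (h1.symm.trans h2) h
                  · rw [if_neg h2]; ring
                · rcases eq_or_ne j k with h2 | h2
                  · rw [if_pos (Or.inr h2), if_neg h1, if_pos h2]; ring
                  · rw [if_neg (by push_neg; exact ⟨h1, h2⟩), if_neg h1, if_neg h2]; ring
              rw [Finset.sum_congr rfl fun j _ => e2 j, ← Finset.sum_mul]
              congr 1
              rw [Finset.sum_sub_distrib, Finset.sum_add_distrib, hπsum,
                Finset.sum_ite_eq' Finset.univ i π, Finset.sum_ite_eq' Finset.univ k π]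
              simp
              ring
    rw [step1, step2, ← Finset.sum_add_distrib]
    refine Finset.sum_congr rfl fun i _ => ?_
    rw [← Finset.sum_add_distrib]
    refine Finset.sum_congr rfl fun j _ => ?_
    rcases eq_or_ne i j with h | h
    · simp [h]
    · rw [if_neg h, if_neg h, if_neg h]; ring
  -- assemble the global bound
  have hmain : (∑ i, ∑ j, if i = j then (0:ℝ) else π i * π j * mFid (ρ i) (ρ j) ^ 2)
      ≤ 2 * ∑ i, ∑ j, if i = j then (0:ℝ) else π i * q i j := by
    calc (∑ i, ∑ j, if i = j then (0:ℝ) else π i * π j * mFid (ρ i) (ρ j) ^ 2)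
        ≤ ∑ i, ∑ j, if i = j then (0:ℝ) else ∑ k, (G i j k + G j i k) := by
          refine Finset.sum_le_sum fun i _ => Finset.sum_le_sum fun j _ => ?_
          rcases eq_or_ne i j with h | h
          · simp [h]
          · rw [if_neg h, if_neg h]
            refine (key i j).trans ?_
            rw [hmsum, Finset.mul_sum]
            exact Finset.sum_le_sum fun k _ => hptwise i j k h
      _ = (∑ i, ∑ j, if i = j then (0:ℝ) else ∑ k, G i j k)
          + (∑ i, ∑ j, if i = j then (0:ℝ) else ∑ k, G j i k) := by
          rw [← Finset.sum_add_distrib]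
          refine Finset.sum_congr rfl fun i _ => ?_
          rw [← Finset.sum_add_distrib]
          refine Finset.sum_congr rfl fun j _ => ?_
          rcases eq_or_ne i j with h | h
          · simp [h]
          · rw [if_neg h, if_neg h, if_neg h, Finset.sum_add_distrib]
      _ = 2 * (∑ i, ∑ j, if i = j then (0:ℝ) else ∑ k, G i j k) := by
          rw [two_mul]
          congr 1
          exact sum_pair_swap (fun a b => ∑ k, G a b k)
      _ = 2 * ∑ i, ∑ j, if i = j then (0:ℝ) else π i * q i j := by rw [hGsum]
  have hgoal : (∑ i, ∑ j, if i = j then (0:ℝ) else π i * ((P j * ρ i).trace).re)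
      = ∑ i, ∑ j, if i = j then (0:ℝ) else π i * q i j := rfl
  rw [hgoal]
  linarith
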